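/- Let f : V → V → A be antisymmetric with divergence zero at every vertex (∑_{u ∈ V} f u v = 0 for all v ∈ V). Then the support graph H of f has no bridges: for all u, v ∈ V with f u v ≠ 0, the edge {u, v} is not a bridge of H. -/

import Mathlib

/-- The support graph of an antisymmetric function `f : V → V → A`: distinct vertices
`u`, `v` are adjacent iff `f u v ≠ 0`. -/
def supportGraph {V A : Type*} [AddCommGroup A] (f : V → V → A)
    (hanti : ∀ u v, f u v = - f v u) (hdiag : ∀ v, f v v = 0) : SimpleGraph V where
  Adj u v := f u v ≠ 0
  symm := by
    constructor
    intro u v h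
    rw [hanti v u]
    simpa using h
  loopless := by
    constructor
    intro v h
    exact h (hdiag v)

/-- If `f : V → V → A` is antisymmetric with divergence zero at every vertex, then
the support graph of `f` has no bridges: whenever `f u v ≠ 0`, the edge `s(u, v)`
is not a bridge of the support graph. -/
theorem supportGraph_no_bridge {V A : Type*} [Fintype V] [AddCommGroup A]
    (f : V → V → A) (hanti : ∀ u v, f u v = - f v u) (hdiag : ∀ v, f v v = 0)
    (hdiv : ∀ v : V, ∑ u : V, f u v = 0) (u v : V) (huv : f u v ≠ 0) :
    ¬ (supportGraph f hanti hdiag).IsBridge s(u, v) := by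
  classical
  intro hbr
  set G := supportGraph f hanti hdiag with hG
  rw [SimpleGraph.isBridge_iff] at hbr
  have hnr := hbr
  set G' := G \ SimpleGraph.fromEdgeSet {s(u, v)} with hG'
  set S : Finset V := Finset.univ.filter (fun w => G'.Reachable v w) with hS
  have hvS : v ∈ S := by simp [hS, SimpleGraph.Reachable.refl]
  have huS : u ∉ S := by
    simp only [hS, Finset.mem_filter, Finset.mem_univ, true_and]
    exact fun h => hnr h.symm
  -- key: crossing edges other than (u,v) carry zero flow
  have closed : ∀ x w, w ∈ S → x ∉ S → f x w ≠ 0 → x = u ∧ w = v := by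
    intro x w hwS hxS hfxw
    have hGadj : G.Adj x w := hfxw
    by_cases he : s(x, w) = s(u, v)
    · rcases Sym2.eq_iff.mp he with ⟨hx, hw⟩ | ⟨hx, hw⟩
      · exact ⟨hx, hw⟩
      · exact absurd (hw ▸ hwS) huS
    · exfalso
      have hG'adj : G'.Adj x w := by
        rw [hG']
        refine ⟨hGadj, ?_⟩
        simp only [SimpleGraph.fromEdgeSet_adj, Set.mem_singleton_iff]
        exact fun h => he h.1
      have hvw : G'.Reachable v w := by
        simpa [hS, Finset.mem_filter] using hwS
      have : G'.Reachable v x := hvw.trans hG'adj.symm.reachable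
      exact hxS (by simp [hS, this])
  have h0 : ∑ w ∈ S, ∑ x : V, f x w = 0 := by simp [hdiv]
  have h0' : ∑ w ∈ S, ∑ x ∈ S, f x w + ∑ w ∈ S, ∑ x ∈ Sᶜ, f x w = 0 := by
    rw [← Finset.sum_add_distrib, ← h0]
    exact Finset.sum_congr rfl fun w _ => (Finset.sum_add_sum_compl S _)
  clear h0; rename' h0' => h0
  have hinner : ∑ w ∈ S, ∑ x ∈ S, f x w = 0 := by
    rw [← Finset.sum_product' (s := S) (t := S) (f := fun w x => f x w)]
    exact Finset.sum_involution (fun p _ => (p.2, p.1))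
      (fun p _ => by simp [hanti p.2 p.1])
      (fun p _ hp h => by
        rcases p with ⟨a, b⟩
        apply hp
        have : a = b := (Prod.mk.injEq _ _ _ _ ▸ h).2
        simp [this, hdiag])
      (fun p hp => by
        rw [Finset.mem_product] at hp ⊢
        exact ⟨hp.2, hp.1⟩)
      (fun p _ => rfl)
  rw [hinner, zero_add] at h0
  -- the crossing sum equals f u v
  have hcross : ∑ w ∈ S, ∑ x ∈ Sᶜ, f x w = f u v := by
    rw [Finset.sum_eq_single v]
    · rw [Finset.sum_eq_single u]
      · intro x hx hxu
        by_contra hne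
        exact hxu (closed x v hvS (Finset.mem_compl.mp hx) hne).1
      · intro h
        exact absurd (Finset.mem_compl.mpr huS) h
    · intro w hw hwv
      apply Finset.sum_eq_zero
      intro x hx
      by_contra hne
      exact hwv (closed x w hw (Finset.mem_compl.mp hx) hne).2
    · intro h; exact absurd hvS h
  rw [hcross] at h0
  exact huv h0
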